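/- Let q : Y → X be a proper surjective map of topological spaces and let g : A → X be a continuous map. Form the pullback P = {p : Y × A // q p.1 = g p.2} with the subspace topology, and let pr : P → Y be the first projection. If pr is a proper map, then g is a proper map. (Topological analogue, for the proper-surjection covers allowed as effective descent morphisms, of Proposition: proper maps descend along effective descent morphisms.) -/

import Mathlib

/-- Topological analogue of "proper maps descend along effective descent morphisms",
for proper-surjection covers: if `q : Y → X` is a proper surjection,
`g : A → X` is continuous, and the pullback projection `pr : P → Y` is proper,
then `g` is proper. -/
theorem proper_descends_along_proper_surjection
    {X Y A : Type*} [TopologicalSpace X] [TopologicalSpace Y] [TopologicalSpace A]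
    (q : Y → X) (hq_proper : IsProperMap q) (hq_surj : Function.Surjective q)
    (g : A → X) (hg_cont : Continuous g)
    (pr : {p : Y × A // q p.1 = g p.2} → Y)
    (hpr : pr = fun p => p.val.1)
    (h : IsProperMap pr) : IsProperMap g := by
  set pr₂ : {p : Y × A // q p.1 = g p.2} → A := fun p => p.val.2 with hpr₂
  have hcont : Continuous pr₂ := continuous_snd.comp continuous_subtype_val
  have hsurj : Function.Surjective pr₂ := by
    intro a
    obtain ⟨y, hy⟩ := hq_surj (g a)
    exact ⟨⟨(y, a), hy⟩, rfl⟩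
  have hcomp : g ∘ pr₂ = q ∘ pr := by
    funext p
    simp [hpr, hpr₂, p.property]
  exact isProperMap_of_comp_of_surj hcont hg_cont
    (hcomp ▸ (hq_proper.comp h)) hsurj
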